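/- For n ≥ 2, with φ(t) = ∫_0^t (1+τ²)^{-n/2} dτ and Φ(ξ) = √( (1+ξ²)^{-n} + ( (n-1)·φ(ξ) + ξ·(1+ξ²)^{-n/2} )² ), the supremum of Φ over all real ξ equals h_n := (n-1)·∫_0^∞ (1+τ²)^{-n/2} dτ. -/

import Mathlib

open MeasureTheory Filter Real Topology

theorem sup_Phi_eq_h_n (n : ℕ) (hn : 2 ≤ n) (φ Φ : ℝ → ℝ)
    (hφ : ∀ t : ℝ, φ t = ∫ τ in (0:ℝ)..t, (1 + τ ^ 2) ^ (-(n : ℝ) / 2))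
    (hΦ : ∀ ξ : ℝ, Φ ξ = Real.sqrt ((1 + ξ ^ 2) ^ (-(n : ℝ)) +
      (((n : ℝ) - 1) * φ ξ + ξ * (1 + ξ ^ 2) ^ (-(n : ℝ) / 2)) ^ 2)) :
    (⨆ ξ : ℝ, Φ ξ) = ((n : ℝ) - 1) * ∫ τ in Set.Ioi (0 : ℝ), (1 + τ ^ 2) ^ (-(n : ℝ) / 2) := by
  set f : ℝ → ℝ := fun τ => (1 + τ ^ 2) ^ (-(n : ℝ) / 2) with hfdef
  have hn2 : (2:ℝ) ≤ (n:ℝ) := by exact_mod_cast hn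
  have hbase : ∀ τ : ℝ, (0:ℝ) < 1 + τ ^ 2 := fun τ => by positivity
  have hone : ∀ τ : ℝ, (1:ℝ) ≤ 1 + τ ^ 2 := fun τ => by nlinarith [sq_nonneg τ]
  have hfpos : ∀ τ : ℝ, 0 < f τ := fun τ => Real.rpow_pos_of_pos (hbase τ) _
  have hfcont : Continuous f := by
    apply Continuous.rpow_const (by continuity)
    intro τ; exact Or.inl (hbase τ).ne'
  have hfle : ∀ τ : ℝ, f τ ≤ (1 + τ ^ 2)⁻¹ := by
    intro τ
    rw [← Real.rpow_neg_one (1 + τ ^ 2)]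
    exact Real.rpow_le_rpow_of_exponent_le (hone τ) (by linarith)
  have hint : IntegrableOn f (Set.Ioi (0:ℝ)) := by
    refine Integrable.mono' integrable_inv_one_add_sq.integrableOn
      (hfcont.aestronglyMeasurable.restrict) ?_
    filter_upwards with τ
    rw [Real.norm_eq_abs, abs_of_pos (hfpos τ)]
    exact hfle τ
  set I : ℝ := ∫ τ in Set.Ioi (0:ℝ), f τ with hIdef
  have hI0 : 0 ≤ I := setIntegral_nonneg measurableSet_Ioi fun τ _ => (hfpos τ).le
  set L : ℝ := ((n:ℝ) - 1) * I with hLdef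
  have hL0 : 0 ≤ L := mul_nonneg (by linarith) hI0
  set A : ℝ → ℝ := fun ξ => ((n:ℝ) - 1) * φ ξ + ξ * f ξ with hAdef
  set g : ℝ → ℝ := fun ξ => (1 + ξ ^ 2) ^ (-(n : ℝ)) + A ξ ^ 2 with hgdef
  have hΦg : ∀ ξ : ℝ, Φ ξ = Real.sqrt (g ξ) := fun ξ => hΦ ξ
  -- tendsto facts
  have t1 : Tendsto φ atTop (𝓝 I) := by
    have := MeasureTheory.intervalIntegral_tendsto_integral_Ioi (0:ℝ) hint tendsto_id
    refine this.congr fun ξ => ?_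
    rw [hφ ξ]; rfl
  have key_ge1 : ∀ᶠ ξ : ℝ in atTop, (1:ℝ) ≤ ξ := eventually_ge_atTop 1
  have t2 : Tendsto (fun ξ : ℝ => ξ * f ξ) atTop (𝓝 0) := by
    apply squeeze_zero' (key_ge1.mono fun ξ hξ => by positivity)
      (key_ge1.mono fun ξ hξ => ?_) tendsto_inv_atTop_zero
    have h1 : f ξ ≤ (ξ ^ 2)⁻¹ := by
      refine (hfle ξ).trans (inv_anti₀ (by positivity) (by linarith))
    calc ξ * f ξ ≤ ξ * (ξ ^ 2)⁻¹ :=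
          mul_le_mul_of_nonneg_left h1 (by linarith)
      _ = ξ⁻¹ := by rw [sq, mul_inv]; field_simp
  have t3 : Tendsto (fun ξ : ℝ => (1 + ξ ^ 2) ^ (-(n:ℝ))) atTop (𝓝 0) := by
    apply squeeze_zero' (key_ge1.mono fun ξ hξ => (Real.rpow_pos_of_pos (hbase ξ) _).le)
      (key_ge1.mono fun ξ hξ => ?_) tendsto_inv_atTop_zero
    have h1 : (1 + ξ ^ 2 : ℝ) ^ (-(n:ℝ)) ≤ (1 + ξ ^ 2)⁻¹ := by
      rw [← Real.rpow_neg_one (1 + ξ ^ 2)]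
      exact Real.rpow_le_rpow_of_exponent_le (hone ξ) (by linarith)
    exact h1.trans (inv_anti₀ (by linarith) (by nlinarith))
  have tA : Tendsto A atTop (𝓝 L) := by
    have := (t1.const_mul ((n:ℝ) - 1)).add t2
    simpa using this
  have tg : Tendsto g atTop (𝓝 (L ^ 2)) := by
    have := t3.add (tA.pow 2)
    rw [zero_add] at this; exact this
  have tΦ : Tendsto Φ atTop (𝓝 L) := by
    have h := tg.sqrt
    rw [Real.sqrt_sq hL0] at h
    exact h.congr fun ξ => (hΦg ξ).symm
  -- derivatives
  have hφderiv : ∀ x : ℝ, HasDerivAt φ (f x) x := by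
    intro x
    have h := intervalIntegral.integral_hasDerivAt_right
      (hfcont.intervalIntegrable 0 x)
      (hfcont.stronglyMeasurableAtFilter _ _)
      hfcont.continuousAt
    have hfun : φ = fun u => ∫ τ in (0:ℝ)..u, f τ := funext hφ
    rw [hfun]
    exact h
  have hbderiv : ∀ x : ℝ, HasDerivAt (fun x : ℝ => 1 + x ^ 2) (2 * x) x := by
    intro x
    simpa using (hasDerivAt_pow 2 x).const_add 1
  have hAderiv : ∀ x : ℝ,
      HasDerivAt A ((n:ℝ) * (1 + x ^ 2) ^ (-(n:ℝ)/2 - 1)) x := by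
    intro x
    have hu : HasDerivAt (fun x : ℝ => (1 + x ^ 2) ^ (-(n:ℝ)/2))
        ((-(n:ℝ)/2) * (1 + x ^ 2) ^ (-(n:ℝ)/2 - 1) * (2 * x)) x := by
      have := (hbderiv x).rpow_const (p := -(n:ℝ)/2) (Or.inl (hbase x).ne')
      convert this using 1; ring
    have hd : HasDerivAt A
        (((n:ℝ) - 1) * f x +
          (1 * f x + x * ((-(n:ℝ)/2) * (1 + x ^ 2) ^ (-(n:ℝ)/2 - 1) * (2 * x)))) x :=
      ((hφderiv x).const_mul _).add ((hasDerivAt_id x).mul hu)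
    have hueq : f x = (1 + x ^ 2) ^ (-(n:ℝ)/2 - 1) * (1 + x ^ 2) := by
      rw [hfdef]
      simp only
      rw [← Real.rpow_add_one (hbase x).ne']
      ring_nf
    convert hd using 1
    rw [hueq]; ring
  have hPderiv : ∀ x : ℝ, HasDerivAt (fun x : ℝ => (1 + x ^ 2) ^ (-(n:ℝ)))
      ((-(n:ℝ)) * (1 + x ^ 2) ^ (-(n:ℝ) - 1) * (2 * x)) x := by
    intro x
    have := (hbderiv x).rpow_const (p := -(n:ℝ)) (Or.inl (hbase x).ne')
    convert this using 1; ring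
  have hgderiv : ∀ x : ℝ, HasDerivAt g
      ((-(n:ℝ)) * (1 + x ^ 2) ^ (-(n:ℝ) - 1) * (2 * x) +
        2 * A x ^ 1 * ((n:ℝ) * (1 + x ^ 2) ^ (-(n:ℝ)/2 - 1))) x := by
    intro x
    exact (hPderiv x).add ((hAderiv x).pow 2)
  have hderiv_eq : ∀ x : ℝ, deriv g x =
      2 * (n:ℝ) * (1 + x ^ 2) ^ (-(n:ℝ)/2 - 1) * (((n:ℝ) - 1) * φ x) := by
    intro x
    rw [(hgderiv x).deriv]
    have hvu : (1 + x ^ 2 : ℝ) ^ (-(n:ℝ) - 1) =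
        (1 + x ^ 2) ^ (-(n:ℝ)/2 - 1) * (1 + x ^ 2) ^ (-(n:ℝ)/2) := by
      rw [← Real.rpow_add (hbase x)]
      ring_nf
    rw [hvu, hAdef, hfdef]
    simp only
    ring
  have hφ0 : ∀ x : ℝ, 0 ≤ x → 0 ≤ φ x := by
    intro x hx
    rw [hφ x]
    exact intervalIntegral.integral_nonneg hx fun u _ => (hfpos u).le
  have hgmono : MonotoneOn g (Set.Ici (0:ℝ)) := by
    apply monotoneOn_of_deriv_nonneg (convex_Ici 0)
    · exact Continuous.continuousOn (continuous_iff_continuousAt.2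
        fun x => (hgderiv x).continuousAt)
    · intro x _
      exact ((hgderiv x).differentiableAt).differentiableWithinAt
    · intro x hx
      rw [interior_Ici] at hx
      rw [hderiv_eq x]
      have h1 : (0:ℝ) < (1 + x ^ 2) ^ (-(n:ℝ)/2 - 1) := Real.rpow_pos_of_pos (hbase x) _
      have h2 : 0 ≤ φ x := hφ0 x hx.le
      have hn0 : (0:ℝ) ≤ (n:ℝ) := by linarith
      apply mul_nonneg (mul_nonneg (mul_nonneg (by norm_num) hn0) h1.le)
        (mul_nonneg (by linarith) h2)
  have hgle : ∀ x : ℝ, 0 ≤ x → g x ≤ L ^ 2 := by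
    intro x hx
    refine ge_of_tendsto tg ?_
    filter_upwards [eventually_ge_atTop x] with y hy
    exact hgmono hx (hx.trans hy) hy
  -- evenness
  have hφodd : ∀ ξ : ℝ, φ (-ξ) = -φ ξ := by
    intro ξ
    rw [hφ, hφ]
    rw [intervalIntegral.integral_symm]
    congr 1
    have := intervalIntegral.integral_comp_neg (a := (0:ℝ)) (b := ξ)
      (f := fun τ => (1 + τ ^ 2 : ℝ) ^ (-(n : ℝ) / 2))
    simp only [neg_zero] at this
    rw [← this]
    congr 1
    ext τ
    rw [neg_pow]
    norm_num
    rfl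
  have hgeven : ∀ ξ : ℝ, g (-ξ) = g ξ := by
    intro ξ
    rw [hgdef]
    simp only
    rw [hAdef]
    simp only
    rw [hφodd ξ, hfdef]
    simp only
    rw [neg_pow]
    norm_num
    ring
  have hub : ∀ ξ : ℝ, Φ ξ ≤ L := by
    intro ξ
    have h1 : g ξ ≤ L ^ 2 := by
      rcases le_total 0 ξ with h | h
      · exact hgle ξ h
      · have h2 := hgle (-ξ) (by linarith)
        rwa [hgeven ξ] at h2
    rw [hΦg]
    calc Real.sqrt (g ξ) ≤ Real.sqrt (L ^ 2) := Real.sqrt_le_sqrt h1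
      _ = L := by rw [Real.sqrt_sq hL0]
  have hbdd : BddAbove (Set.range Φ) := ⟨L, by rintro _ ⟨ξ, rfl⟩; exact hub ξ⟩
  refine le_antisymm (ciSup_le hub) ?_
  exact le_of_tendsto tΦ (Filter.Eventually.of_forall fun y => le_ciSup hbdd y)
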